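/- arXiv:1309.6646 — 3 statements merged into one kernel-verified Lean document; each statement's English description precedes it below -/
import Mathlib

section
/- Let m ≥ 0 be an integer, a, b > 0, and 0 < s₁ < s₂. Define G(s) := (as₁+bs)^{m+2}/(a+b)^{m+1} − a·s₁^{m+2} − (as₂+bs)^{m+2}/(a+b)^{m+1} + a·s₂^{m+2} for s ∈ [s₁, s₂]. Then G(s₁) > 0, G(s₂) < 0, and G is strictly decreasing on [s₁, s₂]; consequently there exists a unique s̃ ∈ (s₁, s₂) with G(s̃) = 0. -/
open Set

lemma conv_aux (m : ℕ) {a b x y : ℝ} (ha : 0 < a) (hb : 0 < b) (hx : 0 ≤ x) (hy : 0 ≤ y)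
    (hne : y ≠ x) :
    (a * y + b * x) ^ (m + 2) / (a + b) ^ (m + 1) < a * y ^ (m + 2) + b * x ^ (m + 2) := by
  have hab : 0 < a + b := by linarith
  have h := (strictConvexOn_pow (n := m + 2) (by omega)).2 (mem_Ici.2 hy) (mem_Ici.2 hx)
    hne (div_pos ha hab) (div_pos hb hab) (by field_simp)
  simp only [smul_eq_mul] at h
  have e1 : a / (a + b) * y + b / (a + b) * x = (a * y + b * x) / (a + b) := by ring
  rw [e1, div_pow] at h
  have h2 : (a * y + b * x) ^ (m + 2) / (a + b) ^ (m + 2) * (a + b)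
      < (a / (a + b) * y ^ (m + 2) + b / (a + b) * x ^ (m + 2)) * (a + b) :=
    mul_lt_mul_of_pos_right h hab
  calc (a * y + b * x) ^ (m + 2) / (a + b) ^ (m + 1)
      = (a * y + b * x) ^ (m + 2) / (a + b) ^ (m + 2) * (a + b) := by
        rw [pow_succ]; field_simp; ring
    _ < (a / (a + b) * y ^ (m + 2) + b / (a + b) * x ^ (m + 2)) * (a + b) := h2
    _ = a * y ^ (m + 2) + b * x ^ (m + 2) := by field_simp

/-- Sign and monotonicity properties of G, yielding a unique interior zero s̃. -/
theorem stmt2 (m : ℕ) (a b s₁ s₂ : ℝ) (ha : 0 < a) (hb : 0 < b)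
    (h1 : 0 < s₁) (h2 : s₁ < s₂)
    (G : ℝ → ℝ)
    (hG : ∀ s : ℝ, G s = (a * s₁ + b * s) ^ (m + 2) / (a + b) ^ (m + 1) - a * s₁ ^ (m + 2)
        - (a * s₂ + b * s) ^ (m + 2) / (a + b) ^ (m + 1) + a * s₂ ^ (m + 2)) :
    0 < G s₁ ∧ G s₂ < 0 ∧ StrictAntiOn G (Set.Icc s₁ s₂) ∧
      ∃! s : ℝ, s ∈ Set.Ioo s₁ s₂ ∧ G s = 0 := by
  have hab : 0 < a + b := by linarith
  have hGfun : G = fun s => (a * s₁ + b * s) ^ (m + 2) / (a + b) ^ (m + 1) - a * s₁ ^ (m + 2)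
      - (a * s₂ + b * s) ^ (m + 2) / (a + b) ^ (m + 1) + a * s₂ ^ (m + 2) := funext hG
  -- sign at s₁
  have hs1 : 0 < G s₁ := by
    rw [hG]
    have h := conv_aux m ha hb h1.le (by linarith : (0:ℝ) ≤ s₂) (by linarith : s₂ ≠ s₁)
    have e : (a * s₁ + b * s₁) ^ (m + 2) / (a + b) ^ (m + 1) = (a + b) * s₁ ^ (m + 2) := by
      have : a * s₁ + b * s₁ = (a + b) * s₁ := by ring
      rw [this, mul_pow, pow_succ]
      field_simp
    rw [e]; nlinarith [h]
  have hs2 : G s₂ < 0 := by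
    rw [hG]
    have h := conv_aux (x := s₂) (y := s₁) m ha hb (by linarith) h1.le h2.ne
    have e : (a * s₂ + b * s₂) ^ (m + 2) / (a + b) ^ (m + 1) = (a + b) * s₂ ^ (m + 2) := by
      have : a * s₂ + b * s₂ = (a + b) * s₂ := by ring
      rw [this, mul_pow, pow_succ]
      field_simp
    rw [e]; nlinarith [h]
  -- continuity
  have hcont : Continuous G := by
    rw [hGfun]
    have : ((a + b) ^ (m + 1) : ℝ) ≠ 0 := by positivity
    fun_prop
  -- strict anti
  have hanti : StrictAntiOn G (Set.Icc s₁ s₂) := by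
    apply strictAntiOn_of_deriv_neg (convex_Icc s₁ s₂) hcont.continuousOn
    intro s hs
    rw [interior_Icc] at hs
    have hd : HasDerivAt G
        ((m + 2) * (a * s₁ + b * s) ^ (m + 1) * b / (a + b) ^ (m + 1) - 0
          - (m + 2) * (a * s₂ + b * s) ^ (m + 1) * b / (a + b) ^ (m + 1) + 0) s := by
      rw [hGfun]
      have d1 : HasDerivAt (fun s : ℝ => (a * s₁ + b * s) ^ (m + 2))
          ((m + 2) * (a * s₁ + b * s) ^ (m + 1) * b) s := by
        have : HasDerivAt (fun s : ℝ => a * s₁ + b * s) b s := by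
          simpa using ((hasDerivAt_id s).const_mul b).const_add (a * s₁)
        simpa [Nat.add_sub_cancel] using (this.fun_pow (m + 2))
      have d2 : HasDerivAt (fun s : ℝ => (a * s₂ + b * s) ^ (m + 2))
          ((m + 2) * (a * s₂ + b * s) ^ (m + 1) * b) s := by
        have : HasDerivAt (fun s : ℝ => a * s₂ + b * s) b s := by
          simpa using ((hasDerivAt_id s).const_mul b).const_add (a * s₂)
        simpa [Nat.add_sub_cancel] using (this.fun_pow (m + 2))
      exact (((d1.div_const _).sub (hasDerivAt_const s _)).sub (d2.div_const _)).add
        (hasDerivAt_const s _)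
    rw [hd.deriv]
    have hlt : (a * s₁ + b * s) ^ (m + 1) < (a * s₂ + b * s) ^ (m + 1) := by
      apply pow_lt_pow_left₀ _ (by nlinarith [hs.1]) (by omega)
      nlinarith [h2]
    have : (0:ℝ) < (a + b) ^ (m + 1) := by positivity
    rw [sub_zero, add_zero, div_sub_div_same]
    apply div_neg_of_neg_of_pos _ this
    rw [sub_neg]
    gcongr
  -- IVT
  have hIcc : Icc (G s₂) (G s₁) ⊆ G '' Icc s₁ s₂ :=
    intermediate_value_Icc' h2.le hcont.continuousOn
  obtain ⟨s, hsmem, hs0⟩ := hIcc ⟨hs2.le, hs1.le⟩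
  have hsIoo : s ∈ Ioo s₁ s₂ := by
    rcases lt_or_eq_of_le hsmem.1 with h | h
    · rcases lt_or_eq_of_le hsmem.2 with h' | h'
      · exact ⟨h, h'⟩
      · exfalso; rw [h'] at hs0; exact hs2.ne hs0
    · exfalso; rw [← h] at hs0; exact hs1.ne' hs0
  refine ⟨hs1, hs2, hanti, ⟨s, ⟨hsIoo, hs0⟩, ?_⟩⟩
  rintro t ⟨htIoo, ht0⟩
  by_contra hne
  rcases lt_or_gt_of_ne hne with h | h
  · have := hanti (Ioo_subset_Icc_self htIoo) (Ioo_subset_Icc_self hsIoo) h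
    rw [ht0, hs0] at this; exact lt_irrefl _ this
  · have := hanti (Ioo_subset_Icc_self hsIoo) (Ioo_subset_Icc_self htIoo) h
    rw [ht0, hs0] at this; exact lt_irrefl _ this
end

section
/- Let m ≥ 0 be an integer, a, b, L > 0, s₀ > 0, and let s₁, s₂ ∈ C¹(0,L) satisfy 0 < s₁(t) < s₀ < s₂(t) and (s₁(t)+s₂(t))/2 = s₀ for all t ∈ (0,L). Let s̃(t) ∈ (s₁(t), s₂(t)) be the unique solution of (as₁(t)+b·s̃)^{m+2} − a(a+b)^{m+1}s₁(t)^{m+2} − (as₂(t)+b·s̃)^{m+2} + a(a+b)^{m+1}s₂(t)^{m+2} = 0. Then s̃ ∈ C¹(0,L) and for every t ∈ (0,L), |s̃'(t)| ≤ [1 + (s₂(t)/s₁(t))^m]·|s₁'(t)|. -/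
open Set

private lemma pow_sub_pow_le_aux {p x : ℝ} (hp : 0 ≤ p) (hpx : p ≤ x) :
    ∀ n : ℕ, x ^ (n + 1) - p ^ (n + 1) ≤ ((n : ℝ) + 1) * x ^ n * (x - p)
  | 0 => by simp
  | (n + 1) => by
    have ih := pow_sub_pow_le_aux hp hpx n
    have hx : (0 : ℝ) ≤ x := hp.trans hpx
    have h1 : p ^ n ≤ x ^ n := pow_le_pow_left₀ hp hpx n
    have e1 : x * (x ^ (n + 1) - p ^ (n + 1)) ≤ x * (((n : ℝ) + 1) * x ^ n * (x - p)) :=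
      mul_le_mul_of_nonneg_left ih hx
    have e2 : p ^ n * p * (x - p) ≤ x ^ n * x * (x - p) :=
      mul_le_mul_of_nonneg_right (mul_le_mul h1 hpx hp (pow_nonneg hx n)) (by linarith)
    simp only [pow_succ] at *
    push_cast
    nlinarith [e1, e2]

private lemma le_pow_sub_pow_aux {p x : ℝ} (hp : 0 ≤ p) (hpx : p ≤ x) :
    ∀ n : ℕ, ((n : ℝ) + 1) * p ^ n * (x - p) ≤ x ^ (n + 1) - p ^ (n + 1)
  | 0 => by simp
  | (n + 1) => by
    have ih := le_pow_sub_pow_aux hp hpx n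
    have hx : (0 : ℝ) ≤ x := hp.trans hpx
    have h1 : p ^ n ≤ x ^ n := pow_le_pow_left₀ hp hpx n
    have hdd : (0 : ℝ) ≤ x ^ n * x - p ^ n * p := by
      have := mul_le_mul h1 hpx hp (pow_nonneg hx n); linarith
    have e1 : p * (((n : ℝ) + 1) * p ^ n * (x - p)) ≤ p * (x ^ n * x - p ^ n * p) := by
      apply mul_le_mul_of_nonneg_left _ hp
      simpa [pow_succ] using ih
    have e0 : p * (x ^ n * x - p ^ n * p) ≤ x * (x ^ n * x - p ^ n * p) :=
      mul_le_mul_of_nonneg_right hpx hdd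
    simp only [pow_succ]
    push_cast
    nlinarith [e1, e0, mul_le_mul_of_nonneg_right (mul_le_mul h1 hpx hp (pow_nonneg hx n)) (sub_nonneg.2 hpx)]

private lemma core_bound (m : ℕ) {X Y P Q D1 D2 D3 r kk d aa bb : ℝ}
    (haa : 0 < aa) (hbb : 0 < bb)
    (hPpos : 0 < P) (hPX : P < X) (hXY : X < Y) (hYQ : Y < Q)
    (hXP : X - P = bb * D1) (hQY : Q - Y = bb * D2) (hYX : Y - X = aa * D3)
    (hD1 : 0 ≤ D1) (hD13 : D1 ≤ D3) (hD2 : 0 ≤ D2) (hD23 : D2 ≤ D3) (hD3 : 0 < D3)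
    (hr : 0 ≤ r) (hQX : Q ^ m ≤ r * X ^ m) (hkk : 0 ≤ kk)
    (habs : |d| * (bb * (Y ^ (m + 1) - X ^ (m + 1)))
      ≤ aa * kk * ((X ^ (m + 1) - P ^ (m + 1)) + (Q ^ (m + 1) - Y ^ (m + 1)))) :
    |d| ≤ (1 + r) * kk := by
  have hXpos : 0 < X := hPpos.trans hPX
  have hYpos : 0 < Y := hXpos.trans hXY
  have hXm : (0 : ℝ) < X ^ m := pow_pos hXpos m
  have hQm : (0 : ℝ) ≤ Q ^ m := (pow_pos (hYpos.trans hYQ) m).le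
  have hu : X ^ (m + 1) - P ^ (m + 1) ≤ ((m : ℝ) + 1) * X ^ m * (bb * D3) := by
    have h := pow_sub_pow_le_aux hPpos.le hPX.le m
    rw [hXP] at h
    refine h.trans ?_
    have h2 : bb * D1 ≤ bb * D3 := by nlinarith
    apply mul_le_mul_of_nonneg_left h2 (by positivity)
  have hv : Q ^ (m + 1) - Y ^ (m + 1) ≤ ((m : ℝ) + 1) * (r * X ^ m) * (bb * D3) := by
    have h := pow_sub_pow_le_aux hYpos.le hYQ.le m
    rw [hQY] at h
    refine h.trans ?_
    have h2 : bb * D2 ≤ bb * D3 := by nlinarith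
    have h3 : ((m : ℝ) + 1) * Q ^ m * (bb * D2) ≤ ((m : ℝ) + 1) * Q ^ m * (bb * D3) := by
      apply mul_le_mul_of_nonneg_left h2; positivity
    refine h3.trans ?_
    apply mul_le_mul_of_nonneg_right _ (by positivity)
    apply mul_le_mul_of_nonneg_left hQX (by positivity)
  have hw : ((m : ℝ) + 1) * X ^ m * (aa * D3) ≤ Y ^ (m + 1) - X ^ (m + 1) := by
    have h := le_pow_sub_pow_aux hXpos.le hXY.le m
    rw [hYX] at h
    exact h
  have hCpos : (0 : ℝ) < ((m : ℝ) + 1) * X ^ m * (bb * D3) := by positivity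
  have hchain : |d| * (aa * (((m : ℝ) + 1) * X ^ m * (bb * D3)))
      ≤ ((1 + r) * kk) * (aa * (((m : ℝ) + 1) * X ^ m * (bb * D3))) := by
    calc |d| * (aa * (((m : ℝ) + 1) * X ^ m * (bb * D3)))
        ≤ |d| * (bb * (Y ^ (m + 1) - X ^ (m + 1))) := by
          apply mul_le_mul_of_nonneg_left _ (abs_nonneg d)
          nlinarith [mul_le_mul_of_nonneg_left hw hbb.le]
      _ ≤ aa * kk * ((X ^ (m + 1) - P ^ (m + 1)) + (Q ^ (m + 1) - Y ^ (m + 1))) := habs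
      _ ≤ aa * kk * (((m : ℝ) + 1) * X ^ m * (bb * D3) + ((m : ℝ) + 1) * (r * X ^ m) * (bb * D3)) := by
          apply mul_le_mul_of_nonneg_left _ (by positivity)
          linarith
      _ = ((1 + r) * kk) * (aa * (((m : ℝ) + 1) * X ^ m * (bb * D3))) := by ring
  exact le_of_mul_le_mul_right hchain (by positivity)

private lemma final_bound (m : ℕ) {a b s1 s2 y k d : ℝ}
    (ha : 0 < a) (hb : 0 < b) (h1 : 0 < s1) (h2 : s1 < y) (h3 : y < s2)
    (hid : d * (b * ((a * s2 + b * y) ^ (m + 1) - (a * s1 + b * y) ^ (m + 1)))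
      = a * k * (((a * s1 + b * y) ^ (m + 1) - ((a + b) * s1) ^ (m + 1))
          - (((a + b) * s2) ^ (m + 1) - (a * s2 + b * y) ^ (m + 1)))) :
    |d| ≤ (1 + (s2 / s1) ^ m) * |k| := by
  have hPpos : (0:ℝ) < (a + b) * s1 := by positivity
  have hPX : (a + b) * s1 < a * s1 + b * y := by nlinarith
  have hXY : a * s1 + b * y < a * s2 + b * y := by nlinarith
  have hYQ : a * s2 + b * y < (a + b) * s2 := by nlinarith
  have hXpos : (0:ℝ) < a * s1 + b * y := hPpos.trans hPX
  have hYpos : (0:ℝ) < a * s2 + b * y := hXpos.trans hXY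
  have hu0 : 0 ≤ (a * s1 + b * y) ^ (m+1) - ((a + b) * s1) ^ (m+1) := by
    have := pow_le_pow_left₀ hPpos.le hPX.le (m+1); linarith
  have hv0 : 0 ≤ ((a + b) * s2) ^ (m+1) - (a * s2 + b * y) ^ (m+1) := by
    have := pow_le_pow_left₀ hYpos.le hYQ.le (m+1); linarith
  have hwpos : 0 < (a * s2 + b * y) ^ (m+1) - (a * s1 + b * y) ^ (m+1) := by
    have h : (a * s1 + b * y) ^ (m+1) < (a * s2 + b * y) ^ (m+1) :=
      pow_lt_pow_left₀ hXY hXpos.le (by omega)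
    linarith
  have habs : |d| * (b * ((a * s2 + b * y) ^ (m+1) - (a * s1 + b * y) ^ (m+1)))
      ≤ a * |k| * (((a * s1 + b * y) ^ (m+1) - ((a + b) * s1) ^ (m+1))
          + (((a + b) * s2) ^ (m+1) - (a * s2 + b * y) ^ (m+1))) := by
    have e1 : |d| * (b * ((a * s2 + b * y) ^ (m+1) - (a * s1 + b * y) ^ (m+1)))
        = |d * (b * ((a * s2 + b * y) ^ (m+1) - (a * s1 + b * y) ^ (m+1)))| := by
      rw [abs_mul, abs_of_pos (mul_pos hb hwpos)]
    rw [e1, hid, abs_mul, abs_mul, abs_of_pos ha, mul_assoc, mul_assoc]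
    apply mul_le_mul_of_nonneg_left _ ha.le
    apply mul_le_mul_of_nonneg_left _ (abs_nonneg k)
    exact (abs_sub _ _).trans (le_of_eq (by rw [abs_of_nonneg hu0, abs_of_nonneg hv0]))
  have hs2 : (0:ℝ) < s2 := by nlinarith
  have hQX : ((a + b) * s2) ^ m ≤ (s2 / s1) ^ m * (a * s1 + b * y) ^ m := by
    have hq : (a + b) * s2 ≤ (s2 / s1) * (a * s1 + b * y) := by
      rw [div_mul_eq_mul_div, le_div_iff₀ h1]
      nlinarith
    calc ((a + b) * s2) ^ m ≤ ((s2 / s1) * (a * s1 + b * y)) ^ m :=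
          pow_le_pow_left₀ (by positivity) hq m
      _ = (s2 / s1) ^ m * (a * s1 + b * y) ^ m := mul_pow _ _ _
  exact core_bound m (D1 := y - s1) (D2 := s2 - y) (D3 := s2 - s1) ha hb hPpos hPX hXY hYQ
    (by ring) (by ring) (by ring)
    (by linarith) (by linarith) (by linarith) (by linarith) (by linarith)
    (pow_nonneg (div_nonneg hs2.le h1.le) m) hQX (abs_nonneg k) habs
/-- Construction Lemma, parts (b)–(c): the implicitly defined curve s̃ is C¹ on (0,L)
and its derivative satisfies |s̃'(t)| ≤ [1 + (s₂(t)/s₁(t))^m]·|s₁'(t)|. -/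
theorem stmt5 (m : ℕ) (a b L s₀ : ℝ) (ha : 0 < a) (hb : 0 < b) (hL : 0 < L) (hs₀ : 0 < s₀)
    (s₁ s₂ s₁' s₂' : ℝ → ℝ)
    (hs₁d : ∀ t ∈ Set.Ioo (0 : ℝ) L, HasDerivAt s₁ (s₁' t) t)
    (hs₂d : ∀ t ∈ Set.Ioo (0 : ℝ) L, HasDerivAt s₂ (s₂' t) t)
    (hs₁c : ContinuousOn s₁' (Set.Ioo 0 L))
    (hs₂c : ContinuousOn s₂' (Set.Ioo 0 L))
    (horder : ∀ t ∈ Set.Ioo (0 : ℝ) L, 0 < s₁ t ∧ s₁ t < s₀ ∧ s₀ < s₂ t)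
    (hmid : ∀ t ∈ Set.Ioo (0 : ℝ) L, (s₁ t + s₂ t) / 2 = s₀)
    (st : ℝ → ℝ)
    (hmem : ∀ t ∈ Set.Ioo (0 : ℝ) L, st t ∈ Set.Ioo (s₁ t) (s₂ t))
    (heq : ∀ t ∈ Set.Ioo (0 : ℝ) L,
      (a * s₁ t + b * st t) ^ (m + 2) - a * (a + b) ^ (m + 1) * (s₁ t) ^ (m + 2)
        - (a * s₂ t + b * st t) ^ (m + 2) + a * (a + b) ^ (m + 1) * (s₂ t) ^ (m + 2) = 0) :
    ContDiffOn ℝ 1 st (Set.Ioo 0 L) ∧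
      ∀ t ∈ Set.Ioo (0 : ℝ) L,
        |deriv st t| ≤ (1 + (s₂ t / s₁ t) ^ m) * |s₁' t| := by
  have hio : IsOpen (Ioo (0:ℝ) L) := isOpen_Ioo
  have hs₁cd : ContDiffOn ℝ 1 s₁ (Ioo 0 L) := by
    rw [show (1 : WithTop ℕ∞) = 0 + 1 from rfl, contDiffOn_succ_iff_deriv_of_isOpen hio]
    refine ⟨fun t ht => (hs₁d t ht).differentiableAt.differentiableWithinAt, by simp, ?_⟩
    rw [contDiffOn_zero]
    exact hs₁c.congr fun t ht => (hs₁d t ht).deriv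
  have hs₂cd : ContDiffOn ℝ 1 s₂ (Ioo 0 L) := by
    rw [show (1 : WithTop ℕ∞) = 0 + 1 from rfl, contDiffOn_succ_iff_deriv_of_isOpen hio]
    refine ⟨fun t ht => (hs₂d t ht).differentiableAt.differentiableWithinAt, by simp, ?_⟩
    rw [contDiffOn_zero]
    exact hs₂c.congr fun t ht => (hs₂d t ht).deriv
  have key : ∀ t₀ ∈ Ioo (0:ℝ) L, ContDiffAt ℝ 1 st t₀ ∧
      |deriv st t₀| ≤ (1 + (s₂ t₀ / s₁ t₀) ^ m) * |s₁' t₀| := by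
    intro t₀ ht₀
    obtain ⟨hs1pos, hs1lt, hs2gt⟩ := horder t₀ ht₀
    obtain ⟨hy1, hy2⟩ := hmem t₀ ht₀
    have hs1t2 : s₁ t₀ < s₂ t₀ := hy1.trans hy2
    have hy0pos : 0 < st t₀ := hs1pos.trans hy1
    have hXpos : 0 < a * s₁ t₀ + b * st t₀ := add_pos (mul_pos ha hs1pos) (mul_pos hb hy0pos)
    have hXYlt : a * s₁ t₀ + b * st t₀ < a * s₂ t₀ + b * st t₀ :=
      add_lt_add_left ((mul_lt_mul_iff_right₀ ha).2 hs1t2) _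
    have hpowlt : (a * s₁ t₀ + b * st t₀) ^ (m+1) < (a * s₂ t₀ + b * st t₀) ^ (m+1) :=
      pow_lt_pow_left₀ hXYlt hXpos.le (by omega)
    have hm2pos : (0:ℝ) < (m:ℝ) + 2 := by positivity
    set p₀ : ℝ × ℝ := (t₀, st t₀) with hp₀
    set G : ℝ × ℝ → ℝ := fun p =>
      (a * s₁ p.1 + b * p.2) ^ (m + 2) - a * (a + b) ^ (m + 1) * (s₁ p.1) ^ (m + 2)
        - (a * s₂ p.1 + b * p.2) ^ (m + 2) + a * (a + b) ^ (m + 1) * (s₂ p.1) ^ (m + 2)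
      with hGdef
    -- smoothness of G at p₀
    have hs₁a : ContDiffAt ℝ 1 s₁ t₀ := hs₁cd.contDiffAt (hio.mem_nhds ht₀)
    have hs₂a : ContDiffAt ℝ 1 s₂ t₀ := hs₂cd.contDiffAt (hio.mem_nhds ht₀)
    have hc1 : ContDiffAt ℝ 1 (fun p : ℝ × ℝ => s₁ p.1) p₀ := hs₁a.comp p₀ contDiffAt_fst
    have hc2 : ContDiffAt ℝ 1 (fun p : ℝ × ℝ => s₂ p.1) p₀ := hs₂a.comp p₀ contDiffAt_fst
    have hG : ContDiffAt ℝ 1 G p₀ := by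
      rw [hGdef]
      exact ((((contDiffAt_const (c := a)).mul hc1).add
            ((contDiffAt_const (c := b)).mul contDiffAt_snd)).pow _ |>.sub
          (contDiffAt_const.mul (hc1.pow _))).sub
          ((((contDiffAt_const (c := a)).mul hc2).add
            ((contDiffAt_const (c := b)).mul contDiffAt_snd)).pow _) |>.add
          (contDiffAt_const.mul (hc2.pow _))
    -- the partial derivative of G
    set fstL : ℝ × ℝ →L[ℝ] ℝ := ContinuousLinearMap.fst ℝ ℝ ℝ with hfstL
    set sndL : ℝ × ℝ →L[ℝ] ℝ := ContinuousLinearMap.snd ℝ ℝ ℝ with hsndL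
    set A : ℝ := ((m:ℝ)+2) * (a * s₁ t₀ + b * st t₀) ^ (m+1) * (a * s₁' t₀)
      - a * (a+b)^(m+1) * (((m:ℝ)+2) * (s₁ t₀)^(m+1) * s₁' t₀)
      - ((m:ℝ)+2) * (a * s₂ t₀ + b * st t₀) ^ (m+1) * (a * s₂' t₀)
      + a * (a+b)^(m+1) * (((m:ℝ)+2) * (s₂ t₀)^(m+1) * s₂' t₀) with hA
    set B : ℝ := ((m:ℝ)+2) * (a * s₁ t₀ + b * st t₀) ^ (m+1) * b
      - ((m:ℝ)+2) * (a * s₂ t₀ + b * st t₀) ^ (m+1) * b with hB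
    have hf1 : HasFDerivAt (fun p : ℝ × ℝ => s₁ p.1) ((s₁' t₀) • fstL) p₀ :=
      (hs₁d t₀ ht₀).comp_hasFDerivAt p₀ hasFDerivAt_fst
    have hf2 : HasFDerivAt (fun p : ℝ × ℝ => s₂ p.1) ((s₂' t₀) • fstL) p₀ :=
      (hs₂d t₀ ht₀).comp_hasFDerivAt p₀ hasFDerivAt_fst
    have hinner1 : HasFDerivAt (fun p : ℝ × ℝ => a * s₁ p.1 + b * p.2)
        (a • ((s₁' t₀) • fstL) + b • sndL) p₀ :=
      (hf1.const_mul a).add (hasFDerivAt_snd.const_mul b)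
    have hinner2 : HasFDerivAt (fun p : ℝ × ℝ => a * s₂ p.1 + b * p.2)
        (a • ((s₂' t₀) • fstL) + b • sndL) p₀ :=
      (hf2.const_mul a).add (hasFDerivAt_snd.const_mul b)
    set M1 : ℝ × ℝ →L[ℝ] ℝ := (((m+2 : ℕ) : ℝ) * (a * s₁ t₀ + b * st t₀) ^ (m+1)) •
      (a • ((s₁' t₀) • fstL) + b • sndL) with hM1
    set M2 : ℝ × ℝ →L[ℝ] ℝ := (a * (a+b)^(m+1) * (((m+2 : ℕ) : ℝ) * (s₁ t₀) ^ (m+1))) •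
      ((s₁' t₀) • fstL) with hM2
    set M3 : ℝ × ℝ →L[ℝ] ℝ := (((m+2 : ℕ) : ℝ) * (a * s₂ t₀ + b * st t₀) ^ (m+1)) •
      (a • ((s₂' t₀) • fstL) + b • sndL) with hM3
    set M4 : ℝ × ℝ →L[ℝ] ℝ := (a * (a+b)^(m+1) * (((m+2 : ℕ) : ℝ) * (s₂ t₀) ^ (m+1))) •
      ((s₂' t₀) • fstL) with hM4
    have hT1 : HasFDerivAt (fun p : ℝ × ℝ => (a * s₁ p.1 + b * p.2) ^ (m+2))
        M1 p₀ := by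
      rw [hM1]
      have hp := hasDerivAt_pow (m+2) (a * s₁ t₀ + b * st t₀)
      simp only [show m + 2 - 1 = m + 1 from rfl] at hp
      exact hp.comp_hasFDerivAt p₀ hinner1
    have hT3 : HasFDerivAt (fun p : ℝ × ℝ => (a * s₂ p.1 + b * p.2) ^ (m+2))
        M3 p₀ := by
      rw [hM3]
      have hp := hasDerivAt_pow (m+2) (a * s₂ t₀ + b * st t₀)
      simp only [show m + 2 - 1 = m + 1 from rfl] at hp
      exact hp.comp_hasFDerivAt p₀ hinner2
    have hT2 : HasFDerivAt (fun p : ℝ × ℝ => a * (a+b)^(m+1) * (s₁ p.1) ^ (m+2))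
        M2 p₀ := by
      rw [hM2]
      have hp := (hasDerivAt_pow (m+2) (s₁ t₀)).const_mul (a * (a+b)^(m+1))
      simp only [show m + 2 - 1 = m + 1 from rfl] at hp
      have := hp.comp_hasFDerivAt p₀ hf1; exact this
    have hT4 : HasFDerivAt (fun p : ℝ × ℝ => a * (a+b)^(m+1) * (s₂ p.1) ^ (m+2))
        M4 p₀ := by
      rw [hM4]
      have hp := (hasDerivAt_pow (m+2) (s₂ t₀)).const_mul (a * (a+b)^(m+1))
      simp only [show m + 2 - 1 = m + 1 from rfl] at hp
      have := hp.comp_hasFDerivAt p₀ hf2; exact this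
    have hGf : HasFDerivAt G (A • fstL + B • sndL) p₀ := by
      have hL : A • fstL + B • sndL = ((M1 - M2) - M3) + M4 := by
        refine ContinuousLinearMap.ext fun v => ?_
        simp only [hM1, hM2, hM3, hM4, ContinuousLinearMap.add_apply,
          ContinuousLinearMap.sub_apply, ContinuousLinearMap.smul_apply, hfstL, hsndL,
          ContinuousLinearMap.coe_fst', ContinuousLinearMap.coe_snd', smul_eq_mul, hA, hB]
        push_cast
        ring
      rw [hL]
      exact ((hT1.sub hT2).sub hT3).add hT4
    have hBneg : B < 0 := by
      rw [hB, sub_neg]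
      exact mul_lt_mul_of_pos_right (mul_lt_mul_of_pos_left hpowlt hm2pos) hb
    have hBne : B ≠ 0 := ne_of_lt hBneg
    -- the local diffeomorphism
    set Φ : ℝ × ℝ → ℝ × ℝ := fun p => (p.1, G p) with hΦdef
    set L1 : ℝ × ℝ →L[ℝ] ℝ × ℝ := fstL.prod (A • fstL + B • sndL) with hL1
    set L2 : ℝ × ℝ →L[ℝ] ℝ × ℝ := fstL.prod (B⁻¹ • (sndL - A • fstL)) with hL2
    have hlr : ∀ p : ℝ × ℝ, L2 (L1 p) = p := by
      intro p
      apply Prod.ext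
      · simp [hL1, hL2, hfstL, hsndL]
      · simp only [hL1, hL2, hfstL, hsndL, ContinuousLinearMap.prod_apply,
          ContinuousLinearMap.add_apply, ContinuousLinearMap.sub_apply,
          ContinuousLinearMap.smul_apply, ContinuousLinearMap.coe_fst',
          ContinuousLinearMap.coe_snd', smul_eq_mul]
        field_simp
        ring
    have hrl : ∀ p : ℝ × ℝ, L1 (L2 p) = p := by
      intro p
      apply Prod.ext
      · simp [hL1, hL2, hfstL, hsndL]
      · simp only [hL1, hL2, hfstL, hsndL, ContinuousLinearMap.prod_apply,
          ContinuousLinearMap.add_apply, ContinuousLinearMap.sub_apply,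
          ContinuousLinearMap.smul_apply, ContinuousLinearMap.coe_fst',
          ContinuousLinearMap.coe_snd', smul_eq_mul]
        field_simp
        ring
    set Φ' : (ℝ × ℝ) ≃L[ℝ] (ℝ × ℝ) := ContinuousLinearEquiv.equivOfInverse L1 L2 hlr hrl
      with hΦ'
    have hΦc : ContDiffAt ℝ 1 Φ p₀ := contDiffAt_fst.prodMk hG
    have hΦf : HasFDerivAt Φ (Φ' : (ℝ × ℝ) →L[ℝ] (ℝ × ℝ)) p₀ := by
      have : (Φ' : (ℝ × ℝ) →L[ℝ] (ℝ × ℝ)) = L1 := rfl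
      rw [this, hL1]
      exact hasFDerivAt_fst.prodMk hGf
    have hstrict : HasStrictFDerivAt Φ (Φ' : (ℝ × ℝ) →L[ℝ] (ℝ × ℝ)) p₀ :=
      hΦc.hasStrictFDerivAt' hΦf one_ne_zero
    set Ψ : ℝ × ℝ → ℝ × ℝ := hstrict.localInverse Φ Φ' p₀ with hΨdef
    have hΨc : ContDiffAt ℝ 1 Ψ (Φ p₀) := hΦc.to_localInverse hΦf one_ne_zero
    have hGp₀ : G p₀ = 0 := heq t₀ ht₀
    have hΦp₀ : Φ p₀ = (t₀, 0) := by
      rw [hΦdef]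
      simp only
      rw [hGp₀]
    -- the locally defined implicit function
    set φ : ℝ → ℝ := fun t => (Ψ (t, 0)).2 with hφdef
    have htend : Filter.Tendsto (fun t : ℝ => ((t, 0) : ℝ × ℝ)) (nhds t₀) (nhds (Φ p₀)) := by
      rw [hΦp₀]
      exact (continuous_id.prodMk continuous_const).continuousAt
    have hev_right : ∀ᶠ t in nhds t₀, Φ (Ψ (t, 0)) = (t, 0) :=
      htend.eventually hstrict.eventually_right_inverse
    have hφt₀ : φ t₀ = st t₀ := by
      have h : Ψ (Φ p₀) = p₀ := hstrict.eventually_left_inverse.self_of_nhds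
      show (Ψ (t₀, 0)).2 = st t₀
      rw [← hΦp₀, h]
    have hφc : ContDiffAt ℝ 1 φ t₀ := by
      have h1 : ContDiffAt ℝ 1 (fun t : ℝ => Ψ (t, 0)) t₀ := by
        have h2 : ContDiffAt ℝ 1 Ψ ((t₀, 0) : ℝ × ℝ) := by rwa [hΦp₀] at hΨc
        exact h2.comp t₀ (contDiffAt_id.prodMk contDiffAt_const)
      exact contDiffAt_snd.comp t₀ h1
    have hφcont : ContinuousAt φ t₀ := hφc.continuousAt
    have hconts₁ : ContinuousAt s₁ t₀ := (hs₁d t₀ ht₀).continuousAt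
    have hconts₂ : ContinuousAt s₂ t₀ := (hs₂d t₀ ht₀).continuousAt
    have hev1 : ∀ᶠ t in nhds t₀, s₁ t < φ t :=
      hconts₁.eventually_lt hφcont (by rw [hφt₀]; exact hy1)
    have hev2 : ∀ᶠ t in nhds t₀, φ t < s₂ t :=
      hφcont.eventually_lt hconts₂ (by rw [hφt₀]; exact hy2)
    have hevI : ∀ᶠ t in nhds t₀, t ∈ Ioo (0:ℝ) L :=
      Filter.eventually_of_mem (hio.mem_nhds ht₀) fun x hx => hx
    have hGφ : ∀ᶠ t in nhds t₀, G (t, φ t) = 0 := by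
      filter_upwards [hev_right] with t hΦΨ
      have h1 : (Ψ (t, 0)).1 = t := congrArg Prod.fst hΦΨ
      have h2 : G (Ψ (t, 0)) = 0 := congrArg Prod.snd hΦΨ
      have h3 : ((t, φ t) : ℝ × ℝ) = Ψ (t, 0) := Prod.ext h1.symm rfl
      rw [h3]
      exact h2
    -- st coincides with φ near t₀
    have hkey_eq : st =ᶠ[nhds t₀] φ := by
      filter_upwards [hev1, hev2, hevI, hGφ] with t h1 h2 hI hG0
      obtain ⟨o1, o2, o3⟩ := horder t hI
      obtain ⟨m1, m2⟩ := hmem t hI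
      have o23 : s₁ t < s₂ t := o2.trans o3
      have hdsAll : ∀ s : ℝ, HasDerivAt (fun u => G (t, u))
          (((m+2 : ℕ) : ℝ) * (a * s₁ t + b * s) ^ (m+1) * b
            - ((m+2 : ℕ) : ℝ) * (a * s₂ t + b * s) ^ (m+1) * b) s := by
        intro s
        have h01 : HasDerivAt (fun u : ℝ => a * s₁ t + b * u) b s := by
          simpa using ((hasDerivAt_id s).const_mul b).const_add (a * s₁ t)
        have h02 : HasDerivAt (fun u : ℝ => a * s₂ t + b * u) b s := by
          simpa using ((hasDerivAt_id s).const_mul b).const_add (a * s₂ t)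
        have hd1 := h01.pow (m+2)
        have hd2 := h02.pow (m+2)
        simp only [show m + 2 - 1 = m + 1 from rfl] at hd1 hd2
        have := ((hd1.sub_const (a * (a+b)^(m+1) * (s₁ t)^(m+2))).sub hd2).add_const
          (a * (a+b)^(m+1) * (s₂ t)^(m+2))
        exact this
      have anti : StrictAntiOn (fun s => G (t, s)) (Icc (s₁ t) (s₂ t)) := by
        apply strictAntiOn_of_deriv_neg (convex_Icc _ _)
        · exact fun s _ => (hdsAll s).continuousAt.continuousWithinAt
        · intro s hs
          rw [interior_Icc] at hs
          rw [(hdsAll s).deriv]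
          have hspos : 0 < s := o1.trans hs.1
          have hx : 0 < a * s₁ t + b * s := add_pos (mul_pos ha o1) (mul_pos hb hspos)
          have hlt : a * s₁ t + b * s < a * s₂ t + b * s :=
            add_lt_add_left ((mul_lt_mul_iff_right₀ ha).2 o23) _
          have hpw : (a * s₁ t + b * s) ^ (m+1) < (a * s₂ t + b * s) ^ (m+1) :=
            pow_lt_pow_left₀ hlt hx.le (by omega)
          have hc : (0:ℝ) < ((m+2 : ℕ) : ℝ) := by positivity
          rw [sub_neg]
          exact mul_lt_mul_of_pos_right (mul_lt_mul_of_pos_left hpw hc) hb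
      have hin1 : st t ∈ Icc (s₁ t) (s₂ t) := ⟨m1.le, m2.le⟩
      have hin2 : φ t ∈ Icc (s₁ t) (s₂ t) := ⟨h1.le, h2.le⟩
      apply anti.injOn hin1 hin2
      show G (t, st t) = G (t, φ t)
      rw [hG0]
      exact heq t hI
    have hstc : ContDiffAt ℝ 1 st t₀ := hφc.congr_of_eventuallyEq hkey_eq
    -- compute the derivative
    have hdiff : DifferentiableAt ℝ st t₀ := hstc.differentiableAt one_ne_zero
    have hdd : HasDerivAt st (deriv st t₀) t₀ := hdiff.hasDerivAt
    have hg0 : HasDerivAt (fun t => G (t, st t)) 0 t₀ := by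
      apply (hasDerivAt_const t₀ (0:ℝ)).congr_of_eventuallyEq
      filter_upwards [hevI] with t hI
      exact heq t hI
    have hinner : HasDerivAt (fun t => a * s₁ t + b * st t) (a * s₁' t₀ + b * deriv st t₀) t₀ :=
      ((hs₁d t₀ ht₀).const_mul a).add (hdd.const_mul b)
    have hinner' : HasDerivAt (fun t => a * s₂ t + b * st t) (a * s₂' t₀ + b * deriv st t₀) t₀ :=
      ((hs₂d t₀ ht₀).const_mul a).add (hdd.const_mul b)
    have hU1 := hinner.pow (m+2)
    have hU3 := hinner'.pow (m+2)
    have hU2 := ((hs₁d t₀ ht₀).pow (m+2)).const_mul (a * (a+b)^(m+1))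
    have hU4 := ((hs₂d t₀ ht₀).pow (m+2)).const_mul (a * (a+b)^(m+1))
    simp only [show m + 2 - 1 = m + 1 from rfl] at hU1 hU2 hU3 hU4
    have htot := ((hU1.sub hU2).sub hU3).add hU4
    have hABd : A + B * deriv st t₀ = 0 := by
      have huniq := htot.unique hg0
      rw [hA, hB]
      push_cast at huniq ⊢
      linarith [huniq]
    -- midpoint condition gives s₂' t₀ = -s₁' t₀
    have hsum : s₁' t₀ + s₂' t₀ = 0 := by
      have hcst : HasDerivAt (fun t => s₁ t + s₂ t) 0 t₀ := by
        apply (hasDerivAt_const t₀ (2 * s₀)).congr_of_eventuallyEq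
        filter_upwards [hevI] with t hI
        have := hmid t hI
        linarith
      have := ((hs₁d t₀ ht₀).add (hs₂d t₀ ht₀)).unique hcst
      linarith
    -- the identity needed for the final bound
    have hid : deriv st t₀ * (b * ((a * s₂ t₀ + b * st t₀) ^ (m + 1)
          - (a * s₁ t₀ + b * st t₀) ^ (m + 1)))
        = a * s₁' t₀ * (((a * s₁ t₀ + b * st t₀) ^ (m + 1) - ((a + b) * s₁ t₀) ^ (m + 1))
            - (((a + b) * s₂ t₀) ^ (m + 1) - (a * s₂ t₀ + b * st t₀) ^ (m + 1))) := by
      have hm2ne : ((m:ℝ) + 2) ≠ 0 := by positivity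
      apply mul_left_cancel₀ hm2ne
      rw [hA, hB] at hABd
      have hs2' : s₂' t₀ = -s₁' t₀ := by linarith
      rw [hs2'] at hABd
      have hmp : ((a + b) * s₁ t₀) ^ (m+1) = (a+b)^(m+1) * (s₁ t₀)^(m+1) := mul_pow _ _ _
      have hmq : ((a + b) * s₂ t₀) ^ (m+1) = (a+b)^(m+1) * (s₂ t₀)^(m+1) := mul_pow _ _ _
      rw [hmp, hmq]
      linarith [hABd]
    refine ⟨hstc, ?_⟩
    exact final_bound m ha hb hs1pos hy1 hy2 hid
  constructor
  · exact fun t ht => ((key t ht).1).contDiffWithinAt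
  · exact fun t ht => (key t ht).2
end

section
/- Let m ≥ 0 be an integer, a, b > 0, s₀ > 0, L > 0, and suppose s₁, s₂ ∈ C¹([0,L]) satisfy (s₁(t)+s₂(t))/2 = s₀ for all t, s₁(0) = s₂(0) = s₀ > 0, s₁'(0⁺) = α, and 0 < s₁(t) < s₀ < s₂(t) for t ∈ (0,L). Let s̃(t) ∈ (s₁(t),s₂(t)) solve (as₁(t)+b·s̃)^{m+2} − a(a+b)^{m+1}s₁(t)^{m+2} − (as₂(t)+b·s̃)^{m+2} + a(a+b)^{m+1}s₂(t)^{m+2} = 0 for t ∈ (0,L). Then lim_{t→0⁺} s̃(t) = s₀ and lim_{t→0⁺} s̃'(t) = 0. -/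
open Set Filter Topology

open Set Filter Topology

lemma stmt6aux_pow_diff_le (n : ℕ) : ∀ x y : ℝ, 0 ≤ y → y ≤ x →
    x ^ (n+1) - y ^ (n+1) ≤ ((n:ℝ)+1) * x ^ n * (x - y) := by
  induction n with
  | zero => intro x y hy hxy; norm_num
  | succ n ih =>
    intro x y hy hxy
    have hx : 0 ≤ x := le_trans hy hxy
    have h1 := mul_le_mul_of_nonneg_left (ih x y hy hxy) hx
    have h2 := mul_le_mul_of_nonneg_right (pow_le_pow_left₀ hy hxy (n+1)) (sub_nonneg.2 hxy)
    have e1 : x^(n+1+1) - y^(n+1+1) = x*(x^(n+1) - y^(n+1)) + (x-y)*y^(n+1) := by ring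
    have e2 : x*(((n:ℝ)+1)*x^n*(x-y)) = ((n:ℝ)+1)*x^(n+1)*(x-y) := by ring
    push_cast
    linarith [h1, h2, e1, e2]

lemma stmt6aux_pow_diff_ge (n : ℕ) : ∀ x y : ℝ, 0 ≤ y → y ≤ x →
    ((n:ℝ)+1) * y ^ n * (x - y) ≤ x ^ (n+1) - y ^ (n+1) := by
  induction n with
  | zero => intro x y hy hxy; norm_num
  | succ n ih =>
    intro x y hy hxy
    have hΔ : 0 ≤ x^(n+1) - y^(n+1) := sub_nonneg.2 (pow_le_pow_left₀ hy hxy (n+1))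
    have h1 := mul_le_mul_of_nonneg_left (ih x y hy hxy) hy
    have h2 := mul_le_mul_of_nonneg_right hxy hΔ
    have e1 : x^(n+1+1) - y^(n+1+1) = x*(x^(n+1) - y^(n+1)) + (x-y)*y^(n+1) := by ring
    have e2 : y*(((n:ℝ)+1)*y^n*(x-y)) = ((n:ℝ)+1)*y^(n+1)*(x-y) := by ring
    push_cast
    linarith [h1, h2, e1, e2]

lemma stmt6aux_pow_convex (n : ℕ) : ∀ x x' d : ℝ, 0 ≤ d → d ≤ x' → x' ≤ x →
    ((n:ℝ)+2)*((n:ℝ)+1) * (x'-d)^n * d * (x-x') ≤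
      (x^(n+2) - (x-d)^(n+2)) - (x'^(n+2) - (x'-d)^(n+2)) := by
  induction n with
  | zero => intro x x' d hd hdx hxx; norm_num; nlinarith
  | succ n ih =>
    intro x x' d hd hdx hxx
    have h0 : (0:ℝ) ≤ x' - d := by linarith
    have hx'0 : (0:ℝ) ≤ x' := le_trans hd hdx
    have hx0 : (0:ℝ) ≤ x := le_trans hx'0 hxx
    have hih := ih x x' d hd hdx hxx
    have hp0 : (0:ℝ) ≤ (x'-d)^n := pow_nonneg h0 n
    have hlhs0 : (0:ℝ) ≤ ((n:ℝ)+2)*((n:ℝ)+1) * (x'-d)^n * d * (x-x') := by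
      apply mul_nonneg (mul_nonneg (mul_nonneg (by positivity) hp0) hd) (by linarith)
    have hA := mul_le_mul (by linarith : x' - d ≤ x) hih hlhs0 hx0
    have hA' : ((n:ℝ)+2)*((n:ℝ)+1)*((x'-d)^(n+1))*d*(x-x')
        ≤ x*(x^(n+2) - (x-d)^(n+2) - (x'^(n+2) - (x'-d)^(n+2))) := by
      have eL : (x'-d)*(((n:ℝ)+2)*((n:ℝ)+1)*(x'-d)^n*d*(x-x'))
          = ((n:ℝ)+2)*((n:ℝ)+1)*((x'-d)^(n+1))*d*(x-x') := by ring
      linarith [eL ▸ hA]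
    have t2 := stmt6aux_pow_diff_ge (n+1) x' (x'-d) h0 (by linarith)
    have hB := mul_le_mul_of_nonneg_left t2 (sub_nonneg.2 hxx)
    have hB' : ((n:ℝ)+2)*((x'-d)^(n+1))*d*(x-x') ≤ (x-x')*(x'^(n+2) - (x'-d)^(n+2)) := by
      have eL : (x-x')*((↑(n+1)+1) * (x'-d)^(n+1) * (x' - (x'-d)))
          = ((n:ℝ)+2)*((x'-d)^(n+1))*d*(x-x') := by push_cast; ring
      linarith [eL ▸ hB]
    have t3 := stmt6aux_pow_diff_ge (n+1) (x-d) (x'-d) h0 (by linarith)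
    have hC := mul_le_mul_of_nonneg_left t3 hd
    have hC' : ((n:ℝ)+2)*((x'-d)^(n+1))*d*(x-x') ≤ d*((x-d)^(n+2) - (x'-d)^(n+2)) := by
      have eL : d*((↑(n+1)+1) * (x'-d)^(n+1) * (x - d - (x'-d)))
          = ((n:ℝ)+2)*((x'-d)^(n+1))*d*(x-x') := by push_cast; ring
      linarith [eL ▸ hC]
    have e1 : x^(n+1+2) - (x-d)^(n+1+2) - (x'^(n+1+2) - (x'-d)^(n+1+2))
        = x*(x^(n+2) - (x-d)^(n+2) - (x'^(n+2) - (x'-d)^(n+2)))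
          + (x-x')*(x'^(n+2) - (x'-d)^(n+2)) + d*((x-d)^(n+2) - (x'-d)^(n+2)) := by ring
    have e2 : ((n:ℝ)+1+2)*((n:ℝ)+1+1) * (x'-d)^(n+1) * d * (x-x')
        = ((n:ℝ)+2)*((n:ℝ)+1)*((x'-d)^(n+1))*d*(x-x')
          + ((n:ℝ)+2)*((x'-d)^(n+1))*d*(x-x') + ((n:ℝ)+2)*((x'-d)^(n+1))*d*(x-x') := by ring
    push_cast
    linarith [hA', hB', hC', e1, e2]

lemma stmt6aux_pow_lip (k : ℕ) (R : ℝ) (hR : 0 ≤ R) : ∃ C, 0 ≤ C ∧ ∀ x y : ℝ, 0 ≤ y → y ≤ x → x ≤ R →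
    x ^ k - y ^ k ≤ C * (x - y) := by
  induction k with
  | zero => exact ⟨0, le_rfl, by intro x y _ _ _; simp⟩
  | succ k ih =>
    obtain ⟨C, hC0, hC⟩ := ih
    refine ⟨R*C + R^k, by positivity, ?_⟩
    intro x y hy hxy hxR
    have h1 := hC x y hy hxy hxR
    have hdn : 0 ≤ x^k - y^k := sub_nonneg.2 (pow_le_pow_left₀ hy hxy k)
    have hA : x*(x^k - y^k) ≤ R*(C*(x-y)) := mul_le_mul hxR h1 hdn hR
    have hB : (x-y)*y^k ≤ (x-y)*R^k :=
      mul_le_mul_of_nonneg_left (pow_le_pow_left₀ hy (le_trans hxy hxR) k) (sub_nonneg.2 hxy)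
    have e1 : x^(k+1) - y^(k+1) = x*(x^k - y^k) + (x-y)*y^k := by ring
    linarith

lemma stmt6aux_even_pair_bound (M : ℝ) (hM : 0 < M) (k : ℕ) : ∃ C, 0 ≤ C ∧ ∀ c : ℝ, 0 ≤ c → c ≤ M →
    |(M+c)^k + (M-c)^k - 2*M^k| ≤ C * c^2 := by
  induction k with
  | zero => exact ⟨0, le_rfl, by intro c _ _; norm_num⟩
  | succ k ih =>
    obtain ⟨C, hC0, hC⟩ := ih
    obtain ⟨C', hC'0, hC'⟩ := stmt6aux_pow_lip k (2*M) (by positivity)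
    refine ⟨M*C + 2*C', by positivity, ?_⟩
    intro c hc hcM
    have h1 := abs_le.1 (hC c hc hcM)
    have h2 : (M+c)^k - (M-c)^k ≤ C' * ((M+c)-(M-c)) :=
      hC' _ _ (by linarith) (by linarith) (by linarith)
    have h3 : 0 ≤ (M+c)^k - (M-c)^k :=
      sub_nonneg.2 (pow_le_pow_left₀ (by linarith) (by linarith) k)
    have e1 : (M+c)^(k+1) + (M-c)^(k+1) - 2*M^(k+1)
        = M*((M+c)^k + (M-c)^k - 2*M^k) + c*((M+c)^k - (M-c)^k) := by ring
    rw [abs_le]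
    constructor
    · nlinarith [mul_le_mul_of_nonneg_left h1.1 hM.le, mul_nonneg hc h3]
    · nlinarith [mul_le_mul_of_nonneg_left h1.2 hM.le, mul_le_mul_of_nonneg_left h2 hc]

lemma stmt6aux_odd_pair_bound (M : ℝ) (hM : 0 < M) (n : ℕ) : ∃ C, 0 ≤ C ∧ ∀ c : ℝ, 0 ≤ c → c ≤ M →
    |(M+c)^(n+1) - (M-c)^(n+1) - 2*((n:ℝ)+1)*M^n*c| ≤ C * c^3 := by
  induction n with
  | zero =>
    refine ⟨0, le_rfl, fun c _ _ => ?_⟩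
    have h : (M+c)^(0+1) - (M-c)^(0+1) - 2*(((0:ℕ):ℝ)+1)*M^0*c = 0 := by push_cast; ring
    rw [h]; simp
  | succ n ih =>
    obtain ⟨C, hC0, hC⟩ := ih
    obtain ⟨C₂, hC₂0, hC₂⟩ := stmt6aux_even_pair_bound M hM (n+1)
    refine ⟨M*C + C₂, by positivity, ?_⟩
    intro c hc hcM
    have h1 := abs_le.1 (hC c hc hcM)
    have h2 := abs_le.1 (hC₂ c hc hcM)
    have e1 : (M+c)^(n+1+1) - (M-c)^(n+1+1) - 2*(((n:ℝ)+1)+1)*M^(n+1)*c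
        = M*((M+c)^(n+1) - (M-c)^(n+1) - 2*((n:ℝ)+1)*M^n*c)
          + c*((M+c)^(n+1) + (M-c)^(n+1) - 2*M^(n+1)) := by ring
    rw [abs_le]
    push_cast
    constructor
    · nlinarith [mul_le_mul_of_nonneg_left h1.1 hM.le, mul_le_mul_of_nonneg_left h2.1 hc]
    · nlinarith [mul_le_mul_of_nonneg_left h1.2 hM.le, mul_le_mul_of_nonneg_left h2.2 hc]

set_option maxHeartbeats 1000000 in
lemma stmt6aux_keyB (m : ℕ) (a b M Cρ : ℝ) (ha : 0 < a) (hb : 0 < b) (hM : 0 < M)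
    (hCρ0 : 0 ≤ Cρ)
    (hCρ : ∀ c : ℝ, 0 ≤ c → c ≤ M →
      |(M+c)^(m+2) - (M-c)^(m+2) - 2*((m:ℝ)+2)*M^(m+1)*c| ≤ Cρ*c^3)
    (u w : ℝ) (hu : 0 < u) (hus : (a+b)*u ≤ M/2) (hw1 : -u < w) (hw2 : w < u)
    (hEQ : (a+b)*((M+a*u+b*w)^(m+2) - (M-a*u+b*w)^(m+2))
      = a*((M+(a+b)*u)^(m+2) - (M-(a+b)*u)^(m+2))) :
    |w| ≤ ((a*Cρ*(a+b)^3 + (a+b)*Cρ*a^3)/(4*a*b*(a+b)*((M/2)^m))) * u^2 := by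
  have haule : a*u ≤ (a+b)*u := by nlinarith
  have hρ1 := abs_le.1 (hCρ (a*u) (by positivity) (by linarith))
  have hρ2 := abs_le.1 (hCρ ((a+b)*u) (by positivity) (by linarith))
  have hDb : |a*((M+(a+b)*u)^(m+2) - (M-(a+b)*u)^(m+2))
      - (a+b)*((M+a*u)^(m+2) - (M-a*u)^(m+2))|
      ≤ (a*Cρ*(a+b)^3 + (a+b)*Cρ*a^3) * u^3 := by
    rw [abs_le]
    constructor
    · linarith [mul_le_mul_of_nonneg_left hρ2.1 ha.le,
        mul_le_mul_of_nonneg_left hρ1.2 (by positivity : (0:ℝ) ≤ a+b)]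
    · linarith [mul_le_mul_of_nonneg_left hρ2.2 ha.le,
        mul_le_mul_of_nonneg_left hρ1.1 (by positivity : (0:ℝ) ≤ a+b)]
  have hDb' := abs_le.1 hDb
  have hpm0 : (0:ℝ) < (M/2)^m := by positivity
  have hc1 : (2:ℝ) ≤ ((m:ℝ)+2)*((m:ℝ)+1) := by
    nlinarith [(Nat.cast_nonneg m : (0:ℝ) ≤ (m:ℝ))]
  rcases le_or_gt 0 w with hw0 | hw0
  · have hcv := stmt6aux_pow_convex m (M+a*u+b*w) (M+a*u) (2*(a*u)) (by positivity)
      (by linarith) (by nlinarith)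
    rw [show M+a*u+b*w - 2*(a*u) = M-a*u+b*w from by ring,
        show M+a*u - 2*(a*u) = M-a*u from by ring,
        show M+a*u+b*w - (M+a*u) = b*w from by ring] at hcv
    have hMau : M/2 ≤ M - a*u := by linarith
    have hpow : (M/2)^m ≤ (M-a*u)^m := pow_le_pow_left₀ (by positivity) hMau m
    have c3 : 2*((M/2)^m) ≤ ((m:ℝ)+2)*((m:ℝ)+1)*(M-a*u)^m := by
      nlinarith [mul_le_mul hc1 hpow hpm0.le (by positivity : (0:ℝ) ≤ ((m:ℝ)+2)*((m:ℝ)+1))]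
    have hT0 : (0:ℝ) ≤ (2*(a*u))*(b*w) := by positivity
    have s1 := mul_le_mul_of_nonneg_right c3 hT0
    have s2 : 2*((M/2)^m)*((2*(a*u))*(b*w))
        ≤ ((M+a*u+b*w)^(m+2) - (M-a*u+b*w)^(m+2)) - ((M+a*u)^(m+2) - (M-a*u)^(m+2)) := by
      linarith [s1, hcv]
    have s3 := mul_le_mul_of_nonneg_left s2 (by positivity : (0:ℝ) ≤ a+b)
    rw [abs_of_nonneg hw0]
    rw [show (a*Cρ*(a+b)^3 + (a+b)*Cρ*a^3)/(4*a*b*(a+b)*((M/2)^m)) * u^2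
        = ((a*Cρ*(a+b)^3 + (a+b)*Cρ*a^3)*u^2)/(4*a*b*(a+b)*((M/2)^m)) from by ring,
      le_div_iff₀ (by positivity)]
    have hfin : 4*a*b*(a+b)*((M/2)^m)*(u*w) ≤ (a*Cρ*(a+b)^3 + (a+b)*Cρ*a^3)*u^3 := by
      linarith [s3, hDb'.2, hEQ]
    nlinarith [hfin, hu]
  · have hcv := stmt6aux_pow_convex m (M+a*u) (M+a*u+b*w) (2*(a*u)) (by positivity)
      (by nlinarith) (by nlinarith)
    rw [show M+a*u+b*w - 2*(a*u) = M-a*u+b*w from by ring,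
        show M+a*u - 2*(a*u) = M-a*u from by ring,
        show M+a*u - (M+a*u+b*w) = b*(-w) from by ring] at hcv
    have hMau : M/2 ≤ M - a*u + b*w := by nlinarith
    have hpow : (M/2)^m ≤ (M-a*u+b*w)^m := pow_le_pow_left₀ (by positivity) hMau m
    have c3 : 2*((M/2)^m) ≤ ((m:ℝ)+2)*((m:ℝ)+1)*(M-a*u+b*w)^m := by
      nlinarith [mul_le_mul hc1 hpow hpm0.le (by positivity : (0:ℝ) ≤ ((m:ℝ)+2)*((m:ℝ)+1))]
    have hT0 : (0:ℝ) ≤ (2*(a*u))*(b*(-w)) := by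
      apply mul_nonneg (by positivity); nlinarith
    have s1 := mul_le_mul_of_nonneg_right c3 hT0
    have s2 : 2*((M/2)^m)*((2*(a*u))*(b*(-w)))
        ≤ ((M+a*u)^(m+2) - (M-a*u)^(m+2)) - ((M+a*u+b*w)^(m+2) - (M-a*u+b*w)^(m+2)) := by
      linarith [s1, hcv]
    have s3 := mul_le_mul_of_nonneg_left s2 (by positivity : (0:ℝ) ≤ a+b)
    rw [abs_of_neg hw0]
    rw [show (a*Cρ*(a+b)^3 + (a+b)*Cρ*a^3)/(4*a*b*(a+b)*((M/2)^m)) * u^2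
        = ((a*Cρ*(a+b)^3 + (a+b)*Cρ*a^3)*u^2)/(4*a*b*(a+b)*((M/2)^m)) from by ring,
      le_div_iff₀ (by positivity)]
    have hfin : 4*a*b*(a+b)*((M/2)^m)*(u*(-w)) ≤ (a*Cρ*(a+b)^3 + (a+b)*Cρ*a^3)*u^3 := by
      linarith [s3, hDb'.1, hEQ]
    nlinarith [hfin, hu]
set_option maxHeartbeats 1000000 in
lemma stmt6aux_keyC (m : ℕ) (a b M Cσ CL CB : ℝ) (ha : 0 < a) (hb : 0 < b) (hM : 0 < M)
    (hCσ0 : 0 ≤ Cσ) (hCL0 : 0 ≤ CL) (hCB0 : 0 ≤ CB)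
    (hCσ : ∀ c : ℝ, 0 ≤ c → c ≤ M → |(M+c)^(m+1) + (M-c)^(m+1) - 2*M^(m+1)| ≤ Cσ*c^2)
    (hCL : ∀ x y : ℝ, 0 ≤ y → y ≤ x → x ≤ 2*M → x^(m+1) - y^(m+1) ≤ CL*(x-y))
    (u w d₁ d₃ : ℝ) (hu : 0 < u) (hus : (a+b)*u ≤ M/2) (hw1 : -u < w) (hw2 : w < u)
    (hwB : |w| ≤ CB*u^2)
    (hDEQ : b*d₃*((M+a*u+b*w)^(m+1) - (M-a*u+b*w)^(m+1)) =
      a*d₁*((M-a*u+b*w)^(m+1) + (M+a*u+b*w)^(m+1)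
        - (M-(a+b)*u)^(m+1) - (M+(a+b)*u)^(m+1))) :
    |d₃| ≤ (a*(2*CL*b*CB + Cσ*a^2 + Cσ*(a+b)^2)/(b*(2*a*((M/2)^m)))) * |d₁| * u := by
  have haule : a*u ≤ (a+b)*u := by nlinarith
  have hbule : b*u ≤ (a+b)*u := by nlinarith
  have hbw1 : b*w ≤ b*u := by nlinarith
  have hbw2 : -(b*u) ≤ b*w := by nlinarith
  have hq2 : M/2 ≤ M - a*u + b*w := by linarith
  have hp2 : M + a*u + b*w ≤ 2*M := by linarith
  have hq2' : M/2 ≤ M - a*u := by linarith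
  have hΔ := stmt6aux_pow_diff_ge m (M+a*u+b*w) (M-a*u+b*w) (by linarith) (by linarith)
  rw [show (M+a*u+b*w)-(M-a*u+b*w) = 2*(a*u) from by ring] at hΔ
  have hpow2 : (M/2)^m ≤ (M-a*u+b*w)^m := pow_le_pow_left₀ (by positivity) hq2 m
  have hΔ2 : 2*a*((M/2)^m)*u ≤ (M+a*u+b*w)^(m+1) - (M-a*u+b*w)^(m+1) := by
    nlinarith [hΔ, mul_le_mul_of_nonneg_right hpow2 (by positivity : (0:ℝ) ≤ 2*(a*u)),
      mul_nonneg (mul_nonneg (Nat.cast_nonneg m : (0:ℝ) ≤ (m:ℝ))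
        (pow_nonneg (by linarith : (0:ℝ) ≤ M-a*u+b*w) m)) (by positivity : (0:ℝ) ≤ 2*(a*u))]
  -- shift bounds
  have t1a : |(M+a*u+b*w)^(m+1) - (M+a*u)^(m+1)| ≤ CL*(b*|w|) := by
    rcases le_or_gt 0 w with h | h
    · have hbw0 : 0 ≤ b*w := by positivity
      have hd := hCL (M+a*u+b*w) (M+a*u) (by linarith) (by linarith) (by linarith)
      rw [abs_of_nonneg (sub_nonneg.2 (pow_le_pow_left₀ (by linarith) (by linarith) (m+1))),
        abs_of_nonneg h]
      linarith [hd]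
    · have hbw0 : b*w < 0 := by nlinarith
      have hd := hCL (M+a*u) (M+a*u+b*w) (by linarith) (by linarith) (by linarith)
      rw [abs_of_nonpos (sub_nonpos.2 (pow_le_pow_left₀ (by linarith) (by linarith) (m+1))),
        abs_of_neg h]
      nlinarith [hd]
  have t1b : |(M-a*u+b*w)^(m+1) - (M-a*u)^(m+1)| ≤ CL*(b*|w|) := by
    rcases le_or_gt 0 w with h | h
    · have hbw0 : 0 ≤ b*w := by positivity
      have hd := hCL (M-a*u+b*w) (M-a*u) (by linarith) (by linarith) (by linarith)
      rw [abs_of_nonneg (sub_nonneg.2 (pow_le_pow_left₀ (by linarith) (by linarith) (m+1))),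
        abs_of_nonneg h]
      linarith [hd]
    · have hbw0 : b*w < 0 := by nlinarith
      have hd := hCL (M-a*u) (M-a*u+b*w) (by linarith) (by linarith) (by linarith)
      rw [abs_of_nonpos (sub_nonpos.2 (pow_le_pow_left₀ (by linarith) (by linarith) (m+1))),
        abs_of_neg h]
      nlinarith [hd]
  have t2 := abs_le.1 (hCσ (a*u) (by positivity) (by linarith))
  have t3 := abs_le.1 (hCσ ((a+b)*u) (by positivity) (by linarith))
  have t1a' := abs_le.1 t1a
  have t1b' := abs_le.1 t1b
  have hw2' : CL*(b*|w|) ≤ CL*b*(CB*u^2) := by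
    nlinarith [mul_le_mul_of_nonneg_left hwB (mul_nonneg hCL0 hb.le)]
  have hN : |(M-a*u+b*w)^(m+1) + (M+a*u+b*w)^(m+1)
      - (M-(a+b)*u)^(m+1) - (M+(a+b)*u)^(m+1)|
      ≤ (2*CL*b*CB + Cσ*a^2 + Cσ*(a+b)^2)*u^2 := by
    rw [abs_le]
    constructor
    · linarith [t1a'.1, t1b'.1, t2.1, t3.2, hw2']
    · linarith [t1a'.2, t1b'.2, t2.2, t3.1, hw2']
  have hΔpos : 0 < (M+a*u+b*w)^(m+1) - (M-a*u+b*w)^(m+1) :=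
    lt_of_lt_of_le (by positivity) hΔ2
  have habs := congrArg abs hDEQ
  simp only [abs_mul] at habs
  rw [abs_of_pos hb, abs_of_pos ha, abs_of_pos hΔpos] at habs
  have h1 : b * |d₃| * (2*a*((M/2)^m)*u)
      ≤ b * |d₃| * ((M+a*u+b*w)^(m+1) - (M-a*u+b*w)^(m+1)) :=
    mul_le_mul_of_nonneg_left hΔ2 (by positivity)
  have h2 : a * |d₁| * |(M-a*u+b*w)^(m+1) + (M+a*u+b*w)^(m+1)
        - (M-(a+b)*u)^(m+1) - (M+(a+b)*u)^(m+1)|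
      ≤ a * |d₁| * ((2*CL*b*CB + Cσ*a^2 + Cσ*(a+b)^2)*u^2) :=
    mul_le_mul_of_nonneg_left hN (by positivity)
  rw [show (a*(2*CL*b*CB + Cσ*a^2 + Cσ*(a+b)^2)/(b*(2*a*((M/2)^m)))) * |d₁| * u
      = (a*(2*CL*b*CB + Cσ*a^2 + Cσ*(a+b)^2) * |d₁| * u)/(b*(2*a*((M/2)^m))) from by ring,
    le_div_iff₀ (by positivity)]
  nlinarith [h1, h2, habs, hu]

set_option maxHeartbeats 1000000

/-- Construction Lemma, part (d), boundary case: when s₁ and s₂ both start at s₀ at t = 0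
with slopes ±α, the implicit curve s̃ tends to s₀ and its derivative tends to 0 as t → 0⁺. -/
theorem stmt6 (m : ℕ) (a b s₀ L α : ℝ) (ha : 0 < a) (hb : 0 < b) (hs₀ : 0 < s₀) (hL : 0 < L)
    (s₁ s₂ : ℝ → ℝ)
    (hs₁C1 : ContDiffOn ℝ 1 s₁ (Set.Icc 0 L))
    (hs₂C1 : ContDiffOn ℝ 1 s₂ (Set.Icc 0 L))
    (hmid : ∀ t ∈ Set.Icc (0 : ℝ) L, (s₁ t + s₂ t) / 2 = s₀)
    (h10 : s₁ 0 = s₀) (h20 : s₂ 0 = s₀)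
    (hslope : HasDerivWithinAt s₁ α (Set.Ici 0) 0)
    (horder : ∀ t ∈ Set.Ioo (0 : ℝ) L, 0 < s₁ t ∧ s₁ t < s₀ ∧ s₀ < s₂ t)
    (st : ℝ → ℝ)
    (hmem : ∀ t ∈ Set.Ioo (0 : ℝ) L, st t ∈ Set.Ioo (s₁ t) (s₂ t))
    (heq : ∀ t ∈ Set.Ioo (0 : ℝ) L,
      (a * s₁ t + b * st t) ^ (m + 2) - a * (a + b) ^ (m + 1) * (s₁ t) ^ (m + 2)
        - (a * s₂ t + b * st t) ^ (m + 2) + a * (a + b) ^ (m + 1) * (s₂ t) ^ (m + 2) = 0)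
    (hdiff : ∀ t ∈ Set.Ioo (0 : ℝ) L, DifferentiableAt ℝ st t) :
    Tendsto st (𝓝[>] 0) (𝓝 s₀) ∧ Tendsto (deriv st) (𝓝[>] 0) (𝓝 0) := by
  have hM : (0:ℝ) < (a+b)*s₀ := by positivity
  set M := (a+b)*s₀ with hMdef
  obtain ⟨Cσ, hCσ0, hCσ⟩ := stmt6aux_even_pair_bound M hM (m+1)
  obtain ⟨Cρ, hCρ0, hCρ⟩ := stmt6aux_odd_pair_bound M hM (m+1)
  obtain ⟨CL, hCL0, hCL⟩ := stmt6aux_pow_lip (m+1) (2*M) (by positivity)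
  replace hCρ : ∀ c : ℝ, 0 ≤ c → c ≤ M →
      |(M+c)^(m+2) - (M-c)^(m+2) - 2*((m:ℝ)+2)*M^(m+1)*c| ≤ Cρ*c^3 := by
    intro c h1 h2
    have h := hCρ c h1 h2
    push_cast at h
    have e : (M+c)^(m+1+1) - (M-c)^(m+1+1) - 2*((m:ℝ)+1+1)*M^(m+1)*c
        = (M+c)^(m+2) - (M-c)^(m+2) - 2*((m:ℝ)+2)*M^(m+1)*c := by ring
    rw [e] at h
    exact h
  set CB := (a*Cρ*(a+b)^3 + (a+b)*Cρ*a^3)/(4*a*b*(a+b)*((M/2)^m)) with hCBdef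
  have hCB0 : 0 ≤ CB := by rw [hCBdef]; positivity
  set CC := a*(2*CL*b*CB + Cσ*a^2 + Cσ*(a+b)^2)/(b*(2*a*((M/2)^m))) with hCCdef
  have hCC0 : 0 ≤ CC := by rw [hCCdef]; positivity
  have hs2eq : ∀ t ∈ Set.Icc (0:ℝ) L, s₂ t = 2*s₀ - s₁ t := by
    intro t ht; have := hmid t ht; linarith
  -- pointwise bounds
  have keyPoint : ∀ t ∈ Set.Ioo (0:ℝ) L, s₀ - s₁ t ≤ s₀/2 →
      |st t - s₀| ≤ CB*(s₀ - s₁ t)^2 ∧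
      |deriv st t| ≤ CC * |deriv s₁ t| * (s₀ - s₁ t) := by
    intro t ht hhalf
    obtain ⟨h1t, h2t, h3t⟩ := horder t ht
    have htIcc : t ∈ Set.Icc (0:ℝ) L := ⟨ht.1.le, ht.2.le⟩
    have hs2t : s₂ t = 2*s₀ - s₁ t := hs2eq t htIcc
    obtain ⟨u, hu1⟩ : ∃ u, s₁ t = s₀ - u := ⟨s₀ - s₁ t, by ring⟩
    obtain ⟨w, hw1⟩ : ∃ w, st t = s₀ + w := ⟨st t - s₀, by ring⟩
    have hu0 : 0 < u := by rw [hu1] at h2t; linarith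
    have hs2t' : s₂ t = s₀ + u := by rw [hs2t, hu1]; ring
    obtain ⟨hm1, hm2⟩ := hmem t ht
    rw [hu1, hw1] at hm1
    rw [hw1, hs2t'] at hm2
    have hw2 : -u < w := by linarith
    have hw3 : w < u := by linarith
    have huhalf : u ≤ s₀/2 := by rw [hu1] at hhalf; linarith
    have hus : (a+b)*u ≤ M/2 := by rw [hMdef]; nlinarith
    -- equation in normalized form
    have heqt := heq t ht
    rw [hu1, hw1, hs2t'] at heqt
    have q1 : (a*(s₀-u) + b*(s₀+w))^(m+2) = (M - a*u + b*w)^(m+2) := by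
      rw [show a*(s₀-u) + b*(s₀+w) = M - a*u + b*w from by rw [hMdef]; ring]
    have q2 : (a*(s₀+u) + b*(s₀+w))^(m+2) = (M + a*u + b*w)^(m+2) := by
      rw [show a*(s₀+u) + b*(s₀+w) = M + a*u + b*w from by rw [hMdef]; ring]
    have q3 : (a+b)*((a+b)^(m+1)*(s₀-u)^(m+2)) = (M-(a+b)*u)^(m+2) := by
      rw [show M-(a+b)*u = (a+b)*(s₀-u) from by rw [hMdef]; ring, mul_pow]; ring
    have q4 : (a+b)*((a+b)^(m+1)*(s₀+u)^(m+2)) = (M+(a+b)*u)^(m+2) := by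
      rw [show M+(a+b)*u = (a+b)*(s₀+u) from by rw [hMdef]; ring, mul_pow]; ring
    have hEQ : (a+b)*((M+a*u+b*w)^(m+2) - (M-a*u+b*w)^(m+2))
        = a*((M+(a+b)*u)^(m+2) - (M-(a+b)*u)^(m+2)) := by
      linear_combination (-(a+b))*heqt + (a+b)*q1 - (a+b)*q2 - a*q3 + a*q4
    have hBnd := stmt6aux_keyB m a b M Cρ ha hb hM hCρ0 hCρ u w hu0 hus hw2 hw3 hEQ
    rw [← hCBdef] at hBnd
    constructor
    · rw [show st t - s₀ = w from by rw [hw1]; ring,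
        show s₀ - s₁ t = u from by rw [hu1]; ring]
      exact hBnd
    -- derivative identity
    have hIccNhds : Set.Icc (0:ℝ) L ∈ 𝓝 t := Icc_mem_nhds ht.1 ht.2
    have hd1 : DifferentiableAt ℝ s₁ t :=
      (hs₁C1.differentiableOn one_ne_zero).differentiableAt hIccNhds
    have hs1d : HasDerivAt s₁ (deriv s₁ t) t := hd1.hasDerivAt
    have hstd : HasDerivAt st (deriv st t) t := (hdiff t ht).hasDerivAt
    have hs2d : HasDerivAt s₂ (-(deriv s₁ t)) t := by
      have h' : HasDerivAt (fun x => 2*s₀ - s₁ x) (-(deriv s₁ t)) t := by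
        have h := (hasDerivAt_const t (2*s₀)).sub hs1d; rw [zero_sub] at h; exact h
      exact h'.congr_of_eventuallyEq
        (Filter.eventuallyEq_of_mem hIccNhds (fun x hx => hs2eq x hx))
    have hqd : HasDerivAt (fun x => a * s₁ x + b * st x)
        (a*(deriv s₁ t) + b*(deriv st t)) t := (hs1d.const_mul a).add (hstd.const_mul b)
    have hpd : HasDerivAt (fun x => a * s₂ x + b * st x)
        (a*(-(deriv s₁ t)) + b*(deriv st t)) t := (hs2d.const_mul a).add (hstd.const_mul b)
    have hF := (((hqd.pow (m+2)).sub ((hs1d.pow (m+2)).const_mul (a*(a+b)^(m+1)))).sub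
        (hpd.pow (m+2))).add ((hs2d.pow (m+2)).const_mul (a*(a+b)^(m+1)))
    have hzero : (fun _ : ℝ => (0:ℝ)) =ᶠ[𝓝 t]
        (fun x => (a * s₁ x + b * st x) ^ (m + 2) - a * (a + b) ^ (m + 1) * (s₁ x) ^ (m + 2)
          - (a * s₂ x + b * st x) ^ (m + 2) + a * (a + b) ^ (m + 1) * (s₂ x) ^ (m + 2)) :=
      Filter.eventuallyEq_of_mem (Ioo_mem_nhds ht.1 ht.2) (fun x hx => (heq x hx).symm)
    have hD0 := (hF.congr_of_eventuallyEq hzero).unique (hasDerivAt_const t 0)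
    simp only [show m+2-1 = m+1 from rfl] at hD0
    push_cast at hD0
    rw [hu1, hw1, hs2t'] at hD0
    have r1 : (a*(s₀-u) + b*(s₀+w))^(m+1) = (M - a*u + b*w)^(m+1) := by
      rw [show a*(s₀-u) + b*(s₀+w) = M - a*u + b*w from by rw [hMdef]; ring]
    have r2 : (a*(s₀+u) + b*(s₀+w))^(m+1) = (M + a*u + b*w)^(m+1) := by
      rw [show a*(s₀+u) + b*(s₀+w) = M + a*u + b*w from by rw [hMdef]; ring]
    have r3 : (a+b)^(m+1)*(s₀-u)^(m+1) = (M-(a+b)*u)^(m+1) := by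
      rw [show M-(a+b)*u = (a+b)*(s₀-u) from by rw [hMdef]; ring, mul_pow]
    have r4 : (a+b)^(m+1)*(s₀+u)^(m+1) = (M+(a+b)*u)^(m+1) := by
      rw [show M+(a+b)*u = (a+b)*(s₀+u) from by rw [hMdef]; ring, mul_pow]
    have hcan : ((m:ℝ)+2)*(b*(deriv st t)*((M+a*u+b*w)^(m+1) - (M-a*u+b*w)^(m+1)))
        = ((m:ℝ)+2)*(a*(deriv s₁ t)*((M-a*u+b*w)^(m+1) + (M+a*u+b*w)^(m+1)
          - (M-(a+b)*u)^(m+1) - (M+(a+b)*u)^(m+1))) := by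
      linear_combination (-1 : ℝ)*hD0
        + (((m:ℝ)+2)*a*(deriv s₁ t) + ((m:ℝ)+2)*b*(deriv st t))*r1
        + (((m:ℝ)+2)*a*(deriv s₁ t) - ((m:ℝ)+2)*b*(deriv st t))*r2
        - ((m:ℝ)+2)*a*(deriv s₁ t)*r3 - ((m:ℝ)+2)*a*(deriv s₁ t)*r4
    have hDEQ := mul_left_cancel₀ (show ((m:ℝ)+2) ≠ 0 by positivity) hcan
    have hC := stmt6aux_keyC m a b M Cσ CL CB ha hb hM hCσ0 hCL0 hCB0 hCσ hCL
      u w (deriv s₁ t) (deriv st t) hu0 hus hw2 hw3 hBnd hDEQ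
    rw [← hCCdef] at hC
    rw [show s₀ - s₁ t = u from by rw [hu1]; ring]
    exact hC
  -- limits
  have hcont : Tendsto s₁ (𝓝[>] (0:ℝ)) (𝓝 s₀) := by
    have hc : ContinuousWithinAt s₁ (Set.Ici (0:ℝ)) 0 := hslope.continuousWithinAt
    have := hc.tendsto
    rw [h10] at this
    exact this.mono_left (nhdsWithin_mono 0 Set.Ioi_subset_Ici_self)
  have hu_t : Tendsto (fun t => s₀ - s₁ t) (𝓝[>] (0:ℝ)) (𝓝 0) := by
    have := hcont.const_sub s₀
    simpa using this
  have hev1 : ∀ᶠ t in 𝓝[>] (0:ℝ), t ∈ Set.Ioo (0:ℝ) L :=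
    Ioo_mem_nhdsGT_of_mem ⟨le_refl 0, hL⟩
  have hev2 : ∀ᶠ t in 𝓝[>] (0:ℝ), s₀ - s₁ t ≤ s₀/2 :=
    (hu_t.eventually_lt_const (by linarith : (0:ℝ) < s₀/2)).mono fun _ h => h.le
  constructor
  · rw [← tendsto_sub_nhds_zero_iff]
    apply squeeze_zero_norm' (a := fun t => s₀ - s₁ t) _ hu_t
    filter_upwards [hev1] with t ht
    obtain ⟨hm1, hm2⟩ := hmem t ht
    have hs2t : s₂ t = 2*s₀ - s₁ t := hs2eq t ⟨ht.1.le, ht.2.le⟩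
    rw [hs2t] at hm2
    rw [Real.norm_eq_abs, abs_le]
    constructor <;> linarith
  · obtain ⟨B, hB⟩ := IsCompact.exists_bound_of_continuousOn isCompact_Icc
      (hs₁C1.continuousOn_derivWithin (uniqueDiffOn_Icc hL) le_rfl)
    have hB0 : 0 ≤ B := le_trans (norm_nonneg _) (hB 0 ⟨le_rfl, hL.le⟩)
    apply squeeze_zero_norm' (a := fun t => (CC*B)*(s₀ - s₁ t)) _
      (by simpa using hu_t.const_mul (CC*B))
    filter_upwards [hev1, hev2] with t ht hth
    have hkp := (keyPoint t ht hth).2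
    have hderiv : deriv s₁ t = derivWithin s₁ (Set.Icc 0 L) t :=
      (derivWithin_of_mem_nhds (Icc_mem_nhds ht.1 ht.2)).symm
    have hBt : |deriv s₁ t| ≤ B := by
      rw [hderiv, ← Real.norm_eq_abs]; exact hB t ⟨ht.1.le, ht.2.le⟩
    have hu0 : 0 < s₀ - s₁ t := by have := (horder t ht).2.1; linarith
    rw [Real.norm_eq_abs]
    calc |deriv st t| ≤ CC * |deriv s₁ t| * (s₀ - s₁ t) := hkp
      _ ≤ (CC*B)*(s₀ - s₁ t) := by nlinarith [mul_le_mul_of_nonneg_left hBt hCC0]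
end
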